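/- arXiv:1811.08157 — 3 statements merged into one kernel-verified Lean document; each statement's English description precedes it below -/
import Mathlib

section
/- Let (x_i)_{i ∈ ℕ} be a sequence of distinct complex numbers with |x_i| → ∞ and let (y_i)_{i ∈ ℕ} be arbitrary complex numbers. Then there exists an entire function a : ℂ → ℂ with a(x_i) = y_i for all i. -/
open Finset Complex

noncomputable def gpoly (x : ℕ → ℂ) (n : ℕ) (z : ℂ) : ℂ := ∏ i ∈ Finset.range n, (z - x i)

noncomputable def lam (x : ℕ → ℂ) (n : ℕ) (c : ℂ) : ℂ :=
  (Real.log (max 1 (2 ^ n * ‖c‖ * ∏ i ∈ Finset.range n, (‖x n‖ - 1 + ‖x i‖))) : ℂ) *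
    (starRingEnd ℂ (x n) / (‖x n‖ : ℂ))

noncomputable def term (x : ℕ → ℂ) (n : ℕ) (c : ℂ) (z : ℂ) : ℂ :=
  c * gpoly x n z * Complex.exp (lam x n c * (z - x n))

noncomputable def cseq (x y : ℕ → ℂ) : ℕ → ℂ
  | n => (y n - ∑ m ∈ (Finset.range n).attach, term x m (cseq x y m) (x n)) / gpoly x n (x n)
  decreasing_by exact Finset.mem_range.mp m.2

lemma cseq_eq (x y : ℕ → ℂ) (n : ℕ) :
    cseq x y n = (y n - ∑ m ∈ Finset.range n, term x m (cseq x y m) (x n)) / gpoly x n (x n) := by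
  rw [cseq, ← Finset.sum_attach (Finset.range n) (fun m => term x m (cseq x y m) (x n))]

lemma term_differentiable (x : ℕ → ℂ) (n : ℕ) (c : ℂ) :
    Differentiable ℂ (fun z => term x n c z) := by
  unfold term gpoly
  exact (((Differentiable.fun_finsetProd (fun i _ => (differentiable_id.sub_const _))).const_mul
    c)).mul (((differentiable_id.sub_const _).const_mul _).cexp)

lemma term_zero (x : ℕ → ℂ) (n : ℕ) (c : ℂ) {i : ℕ} (hi : i < n) :
    term x n c (x i) = 0 := by
  have h0 : (∏ j ∈ Finset.range n, (x i - x j)) = 0 :=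
    Finset.prod_eq_zero (Finset.mem_range.mpr hi) (sub_self (x i))
  unfold term gpoly
  rw [h0, mul_zero, zero_mul]

lemma gpoly_ne_zero (x : ℕ → ℂ) (hx : Function.Injective x) (n : ℕ) :
    gpoly x n (x n) ≠ 0 := by
  refine Finset.prod_ne_zero_iff.mpr fun i hi => ?_
  have : i ≠ n := (Finset.mem_range.mp hi).ne
  exact sub_ne_zero.mpr fun h => this (hx h.symm)

lemma term_bound (x : ℕ → ℂ) (n : ℕ) (c : ℂ) (z : ℂ) (hz : ‖z‖ + 1 ≤ ‖x n‖) :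
    ‖term x n c z‖ ≤ (1 / 2) ^ n := by
  have hz0 : (0:ℝ) ≤ ‖z‖ := norm_nonneg z
  have hxn : (1:ℝ) ≤ ‖x n‖ := by linarith
  have hxn0 : x n ≠ 0 := by
    intro h; rw [h, norm_zero] at hxn; linarith
  set P : ℝ := ∏ i ∈ Finset.range n, (‖x n‖ - 1 + ‖x i‖) with hP
  set M : ℝ := max 1 (2 ^ n * ‖c‖ * P) with hM
  have hM1 : (1:ℝ) ≤ M := le_max_left _ _
  have hM0 : (0:ℝ) < M := lt_of_lt_of_le one_pos hM1
  set t : ℝ := Real.log M with ht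
  have ht0 : 0 ≤ t := Real.log_nonneg hM1
  -- bound on the real part of the exponent
  have hre : (lam x n c * (z - x n)).re ≤ -t := by
    have h1 : lam x n c * (z - x n) = (t : ℂ) * ((starRingEnd ℂ (x n) * (z - x n)) / (‖x n‖ : ℂ)) := by
      unfold lam; ring
    have h2 : (starRingEnd ℂ (x n) * (z - x n)).re ≤ ‖x n‖ * (‖z‖ - ‖x n‖) := by
      have := Complex.re_le_norm (starRingEnd ℂ (x n) * z)
      have habs : ‖starRingEnd ℂ (x n) * z‖ = ‖x n‖ * ‖z‖ := by
        simp [norm_mul]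
      rw [mul_sub]
      have h3 : (starRingEnd ℂ (x n) * x n).re = ‖x n‖ * ‖x n‖ := by
        rw [mul_comm, Complex.mul_conj]
        simp [Complex.normSq_eq_norm_sq, sq]
      rw [Complex.sub_re, h3]
      nlinarith [this, habs]
    rw [h1]
    have h4 : ((t : ℂ) * ((starRingEnd ℂ (x n) * (z - x n)) / (‖x n‖ : ℂ))).re
        = t * ((starRingEnd ℂ (x n) * (z - x n)).re / ‖x n‖) := by
      rw [Complex.re_ofReal_mul, Complex.div_ofReal_re]
    rw [h4]
    have hxpos : (0:ℝ) < ‖x n‖ := by linarith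
    have h5 : (starRingEnd ℂ (x n) * (z - x n)).re / ‖x n‖ ≤ ‖z‖ - ‖x n‖ := by
      rw [div_le_iff₀ hxpos]; nlinarith
    have h6 : ‖z‖ - ‖x n‖ ≤ -1 := by linarith
    calc t * ((starRingEnd ℂ (x n) * (z - x n)).re / ‖x n‖)
        ≤ t * (-1) := by
          apply mul_le_mul_of_nonneg_left _ ht0
          linarith
      _ = -t := by ring
  -- bound on the polynomial part
  have hgp : ‖gpoly x n z‖ ≤ P := by
    unfold gpoly
    calc ‖∏ i ∈ Finset.range n, (z - x i)‖ = ∏ i ∈ Finset.range n, ‖z - x i‖ := by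
          rw [norm_prod]
      _ ≤ P := by
          apply Finset.prod_le_prod (fun i _ => norm_nonneg _) (fun i _ => ?_)
          calc ‖z - x i‖ ≤ ‖z‖ + ‖x i‖ := norm_sub_le _ _
            _ ≤ ‖x n‖ - 1 + ‖x i‖ := by linarith
  have hgp0 : (0:ℝ) ≤ ‖gpoly x n z‖ := norm_nonneg _
  have hP0 : (0:ℝ) ≤ P := le_trans hgp0 hgp
  -- putting it together
  have hexp : ‖Complex.exp (lam x n c * (z - x n))‖ ≤ Real.exp (-t) := by
    rw [Complex.norm_exp]
    exact Real.exp_le_exp.mpr hre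
  have hexpval : Real.exp (-t) = 1 / M := by
    rw [Real.exp_neg, ht, Real.exp_log hM0, one_div]
  have key : ‖c‖ * P ≤ (1 / 2) ^ n * M := by
    have : 2 ^ n * ‖c‖ * P ≤ M := le_max_right _ _
    have h2n : (0:ℝ) < (1/2:ℝ) ^ n := by positivity
    calc ‖c‖ * P = (1/2)^n * (2^n * ‖c‖ * P) := by
          rw [← mul_assoc, ← mul_assoc, ← mul_pow]; norm_num
      _ ≤ (1/2)^n * M := by
          exact mul_le_mul_of_nonneg_left this (le_of_lt h2n)
  calc ‖term x n c z‖ = ‖c‖ * ‖gpoly x n z‖ * ‖Complex.exp (lam x n c * (z - x n))‖ := by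
        unfold term; rw [norm_mul, norm_mul]
    _ ≤ ‖c‖ * P * (1 / M) := by
        apply mul_le_mul
        · exact mul_le_mul_of_nonneg_left hgp (norm_nonneg c)
        · rw [← hexpval]; exact hexp
        · exact norm_nonneg _
        · positivity
    _ ≤ (1 / 2) ^ n := by
        rw [mul_one_div, div_le_iff₀ hM0]
        exact key

theorem stmt3 (x : ℕ → ℂ) (hx : Function.Injective x)
    (htend : Filter.Tendsto (fun i => ‖x i‖) Filter.atTop Filter.atTop)
    (y : ℕ → ℂ) :
    ∃ a : ℂ → ℂ, Differentiable ℂ a ∧ ∀ i : ℕ, a (x i) = y i := by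
  set f : ℕ → ℂ → ℂ := fun n z => term x n (cseq x y n) z with hf
  refine ⟨fun z => ∑' n, f n z, ?_, ?_⟩
  · -- differentiability
    intro z₀
    set R : ℝ := ‖z₀‖ + 1 with hR
    obtain ⟨N₀, hN₀⟩ := (htend.eventually_ge_atTop (R + 1)).exists_forall_of_atTop
    have hball : ∀ n, N₀ ≤ n → ∀ w ∈ Metric.ball (0:ℂ) R, ‖f n w‖ ≤ (1/2)^n := by
      intro n hn w hw
      apply term_bound
      have : ‖w‖ < R := by simpa using hw
      have := hN₀ n hn
      linarith
    have hsum : ∀ w ∈ Metric.ball (0:ℂ) R, Summable (fun n => f n w) := by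
      intro w hw
      rw [← summable_nat_add_iff N₀]
      apply Summable.of_norm_bounded (g := fun k => (1/2:ℝ)^(k + N₀))
      · have : Summable (fun k : ℕ => (1/2:ℝ)^k * (1/2)^N₀) :=
          (summable_geometric_of_lt_one (by norm_num) (by norm_num)).mul_right _
        simpa [pow_add] using this
      · intro k
        exact hball (k + N₀) (Nat.le_add_left _ _) w hw
    have heq : ∀ w ∈ Metric.ball (0:ℂ) R,
        (∑' n, f n w) = (∑ n ∈ Finset.range N₀, f n w) + ∑' k, f (k + N₀) w := by
      intro w hw
      exact (Summable.sum_add_tsum_nat_add N₀ (hsum w hw)).symm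
    have hdiff : DifferentiableOn ℂ
        (fun w => (∑ n ∈ Finset.range N₀, f n w) + ∑' k, f (k + N₀) w)
        (Metric.ball (0:ℂ) R) := by
      apply DifferentiableOn.add
      · exact (Differentiable.fun_sum fun n _ => term_differentiable x n _).differentiableOn
      · apply differentiableOn_tsum_of_summable_norm
          (u := fun k => (1/2:ℝ)^(k + N₀))
        · have : Summable (fun k : ℕ => (1/2:ℝ)^k * (1/2)^N₀) :=
            (summable_geometric_of_lt_one (by norm_num) (by norm_num)).mul_right _
          simpa [pow_add] using this
        · exact fun k => (term_differentiable x (k + N₀) _).differentiableOn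
        · exact Metric.isOpen_ball
        · intro k w hw
          exact hball (k + N₀) (Nat.le_add_left _ _) w hw
    have hz₀ : z₀ ∈ Metric.ball (0:ℂ) R := by
      simp [hR]
    have := (hdiff.differentiableAt (Metric.isOpen_ball.mem_nhds hz₀))
    apply this.congr_of_eventuallyEq
    filter_upwards [Metric.isOpen_ball.mem_nhds hz₀] with w hw
    exact heq w hw
  · -- interpolation values
    intro i
    have hzero : ∀ n ∉ Finset.range (i + 1), f n (x i) = 0 := by
      intro n hn
      have hlt : i < n := by
        have := Finset.mem_range.not.mp hn
        omega
      exact term_zero x n _ hlt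
    show (∑' n, f n (x i)) = y i
    rw [tsum_eq_sum hzero, Finset.sum_range_succ]
    have hfi : f i (x i) = cseq x y i * gpoly x i (x i) := by
      simp [hf, term, sub_self, mul_zero, Complex.exp_zero]
    rw [hfi, cseq_eq]
    have hg := gpoly_ne_zero x hx i
    field_simp
    simp only [hf]
    ring
end

section
/- Let X ⊂ ℂ² be a subset such that the first-coordinate projection π restricted to X is proper (as a map X → ℂ), and let a, b be entire functions with b not identically zero. Define α(x, y) = (x, (y - a(x))/b(x)) for b(x) ≠ 0. If (x_n, y_n) ∈ X with b(x_n) ≠ 0 and (x_n, y_n) leaving every compact subset of X' = {(x,y) ∈ X : b(x) ≠ 0}, and additionally whenever b(x₀) = 0 and (x₀, y₀) ∈ X is a limit point of the sequence then y₀ ≠ a(x₀), it follows that α(x_n, y_n) leaves every compact subset of ℂ². -/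
open Filter Topology

theorem stmt15 (X : Set (ℂ × ℂ))
    (hproper : ∀ K : Set ℂ, IsCompact K → IsCompact {q ∈ X | q.1 ∈ K})
    (a b : ℂ → ℂ) (ha : Differentiable ℂ a) (hb : Differentiable ℂ b)
    (hbne : b ≠ 0)
    (q : ℕ → ℂ × ℂ) (hqX : ∀ n, q n ∈ X) (hqb : ∀ n, b (q n).1 ≠ 0)
    (hdiv : ∀ K : Set (ℂ × ℂ), IsCompact K → K ⊆ {p ∈ X | b p.1 ≠ 0} →
      ∀ᶠ n in Filter.atTop, q n ∉ K)
    (hlim : ∀ q₀ ∈ X, b q₀.1 = 0 → MapClusterPt q₀ Filter.atTop q →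
      q₀.2 ≠ a q₀.1) :
    ∀ K : Set (ℂ × ℂ), IsCompact K →
      ∀ᶠ n in Filter.atTop,
        ((q n).1, ((q n).2 - a (q n).1) / b (q n).1) ∉ K := by
  intro K hK
  by_contra hcon
  rw [Filter.not_eventually] at hcon
  simp only [not_not] at hcon
  set g : ℕ → ℂ × ℂ := fun n => ((q n).1, ((q n).2 - a (q n).1) / b (q n).1) with hg
  set F : Filter ℕ := Filter.atTop ⊓ Filter.principal {n | g n ∈ K} with hF
  have hFne : F.NeBot := Filter.frequently_iff_neBot.mp hcon
  have hFle : F ≤ Filter.atTop := inf_le_left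
  have hmap : Filter.map g F ≤ Filter.principal K := by
    rw [Filter.le_principal_iff, Filter.mem_map]
    exact Filter.mem_inf_of_right (Filter.mem_principal.mpr fun n hn => hn)
  obtain ⟨p, hpK, hp⟩ := hK hmap
  set β : ℂ × ℂ → ℂ × ℂ := fun z => (z.1, a z.1 + z.2 * b z.1) with hβ
  have hβc : Continuous β := by
    refine continuous_fst.prodMk ?_
    exact ((ha.continuous.comp continuous_fst).add
      (continuous_snd.mul (hb.continuous.comp continuous_fst)))
  have hqg : ∀ n, β (g n) = q n := by
    intro n
    simp only [hβ, hg]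
    rw [div_mul_cancel₀ _ (hqb n)]
    simp
  have hcl : MapClusterPt (β p) F q := by
    have : MapClusterPt p F g := hp
    have h2 := this.continuousAt_comp hβc.continuousAt
    have : β ∘ g = q := funext hqg
    rwa [this] at h2
  set q₀ : ℂ × ℂ := β p with hq₀
  set x₀ : ℂ := p.1 with hx₀
  -- the auxiliary NeBot filter
  have hGne : (𝓝 q₀ ⊓ Filter.map q F).NeBot := hcl
  have hq₀X : q₀ ∈ X := by
    set C : Set (ℂ × ℂ) := {p' ∈ X | p'.1 ∈ Metric.closedBall x₀ 1} with hC
    have hCc : IsCompact C := hproper _ (isCompact_closedBall x₀ 1)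
    have hmem : C ∈ 𝓝 q₀ ⊓ Filter.map q F := by
      refine Filter.mem_inf_of_inter (s := {p' : ℂ × ℂ | p'.1 ∈ Metric.closedBall x₀ 1})
        ?_ (t := X) ?_ ?_
      · exact continuous_fst.continuousAt.preimage_mem_nhds
          (Metric.closedBall_mem_nhds _ one_pos)
      · exact Filter.mem_map.mpr (Filter.univ_mem' hqX)
      · intro z hz; exact ⟨hz.2, hz.1⟩
    have : q₀ ∈ closure C := by
      rw [mem_closure_iff_clusterPt]
      exact hGne.mono (le_inf inf_le_left (Filter.le_principal_iff.mpr hmem))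
    rw [hCc.isClosed.closure_eq] at this
    exact this.1
  by_cases hb0 : b x₀ = 0
  · have hM : MapClusterPt q₀ Filter.atTop q := hcl.mono hFle
    have := hlim q₀ hq₀X hb0 hM
    apply this
    simp [hq₀, hβ, hb0]
    exact Or.inr hb0
  · -- find r > 0 with b ≠ 0 on closedBall x₀ r
    have hev : ∀ᶠ x in 𝓝 x₀, b x ≠ 0 := hb.continuous.continuousAt.eventually_ne hb0
    obtain ⟨r, hr, hrb⟩ := (Metric.nhds_basis_closedBall.eventually_iff).mp hev
    set C : Set (ℂ × ℂ) := {p' ∈ X | p'.1 ∈ Metric.closedBall x₀ r} with hC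
    have hCc : IsCompact C := hproper _ (isCompact_closedBall x₀ r)
    have hCsub : C ⊆ {p ∈ X | b p.1 ≠ 0} := fun z hz => ⟨hz.1, hrb hz.2⟩
    have hne : ∀ᶠ n in Filter.atTop, q n ∉ C := hdiv C hCc hCsub
    have hCin : C ∈ 𝓝 q₀ ⊓ Filter.map q F := by
      refine Filter.mem_inf_of_inter (s := {p' : ℂ × ℂ | p'.1 ∈ Metric.closedBall x₀ r})
        ?_ (t := X) ?_ ?_
      · exact continuous_fst.continuousAt.preimage_mem_nhds (Metric.closedBall_mem_nhds _ hr)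
      · exact Filter.mem_map.mpr (Filter.univ_mem' hqX)
      · intro z hz; exact ⟨hz.2, hz.1⟩
    have hCout : Cᶜ ∈ 𝓝 q₀ ⊓ Filter.map q F := by
      refine Filter.mem_inf_of_right ?_
      exact Filter.mem_map.mpr (hFle hne)
    have : (∅ : Set (ℂ × ℂ)) ∈ 𝓝 q₀ ⊓ Filter.map q F := by
      have := Filter.inter_mem hCin hCout
      simpa using this
    exact hGne.ne (Filter.empty_mem_iff_bot.mp this)
end

section
/- Every finite subset C of the Riemann sphere ℙ¹(ℂ) with C nonempty has the property that ℙ¹(ℂ) \ C admits a proper holomorphic embedding into ℂ². Explicitly, after a Möbius transformation sending one point of C to ∞, the complement ℂ \ {c₂, …, c_n} embeds via x ↦ (x, ∏ᵢ 1/(x - cᵢ)). -/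
open Filter Topology Set Bornology OnePoint

noncomputable def oinv : OnePoint ℂ → OnePoint ℂ :=
  fun x => OnePoint.rec ((0:ℂ) : OnePoint ℂ)
    (fun z => if z = 0 then ∞ else ((z⁻¹ : ℂ) : OnePoint ℂ)) x

lemma oinv_coe (z : ℂ) :
    oinv (z : OnePoint ℂ) = if z = 0 then ∞ else ((z⁻¹ : ℂ) : OnePoint ℂ) := rfl

lemma oinv_infty : oinv ∞ = ((0:ℂ) : OnePoint ℂ) := rfl

lemma oinv_oinv (x : OnePoint ℂ) : oinv (oinv x) = x := by
  induction x using OnePoint.rec with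
  | infty => simp [oinv_infty, oinv_coe]
  | coe z =>
    rcases eq_or_ne z 0 with rfl | hz
    · simp [oinv_coe, oinv_infty]
    · simp [oinv_coe, hz, inv_eq_zero]

lemma tendsto_coe_infty' : Tendsto ((↑) : ℂ → OnePoint ℂ) (cobounded ℂ) (𝓝 ∞) := by
  rw [Metric.cobounded_eq_cocompact, ← Filter.coclosedCompact_eq_cocompact, OnePoint.nhds_infty_eq]
  exact Filter.Tendsto.mono_right tendsto_map le_sup_left

lemma continuous_oinv : Continuous oinv := by
  rw [OnePoint.continuous_iff]
  constructor
  · rw [oinv_infty, Filter.coclosedCompact_eq_cocompact, ← Metric.cobounded_eq_cocompact]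
    have h0 : ∀ᶠ z : ℂ in cobounded ℂ, z ≠ 0 := by
      filter_upwards [tendsto_norm_cobounded_atTop.eventually_ge_atTop 1] with z hz
      intro h; simp [h] at hz; linarith
    have h1 : Tendsto (fun z : ℂ => ((z⁻¹ : ℂ) : OnePoint ℂ)) (cobounded ℂ)
        (𝓝 ((0:ℂ) : OnePoint ℂ)) :=
      (OnePoint.continuous_coe.tendsto (0:ℂ)).comp tendsto_inv₀_cobounded
    refine h1.congr' ?_
    filter_upwards [h0] with z hz
    rw [oinv_coe, if_neg hz]
  · rw [continuous_iff_continuousAt]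
    intro z
    rcases eq_or_ne z 0 with rfl | hz
    · have key : Tendsto (fun w : ℂ => oinv w) (𝓝[≠] (0:ℂ)) (𝓝 ∞) := by
        have h2 : Tendsto (fun w : ℂ => ‖w‖) (𝓝[≠] (0:ℂ)) (𝓝[>] (0:ℝ)) := by
          rw [tendsto_nhdsWithin_iff]
          constructor
          · exact (continuous_norm.tendsto' 0 0 norm_zero).mono_left nhdsWithin_le_nhds
          · filter_upwards [self_mem_nhdsWithin] with w hw
            simpa using norm_pos_iff.mpr hw
        have h1 : Tendsto (fun w : ℂ => w⁻¹) (𝓝[≠] (0:ℂ)) (cobounded ℂ) := by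
          rw [← tendsto_norm_atTop_iff_cobounded]
          exact (tendsto_inv_nhdsGT_zero.comp h2).congr fun w => (norm_inv w).symm
        refine (tendsto_coe_infty'.comp h1).congr' ?_
        filter_upwards [self_mem_nhdsWithin] with w hw
        simp only [Function.comp]
        rw [oinv_coe]
        exact (if_neg (by simpa using hw)).symm
      have hsup : 𝓝 (0:ℂ) = 𝓝[≠] (0:ℂ) ⊔ pure 0 :=
        (nhdsNE_sup_pure (0:ℂ)).symm
      have : ContinuousAt (fun w : ℂ => oinv w) 0 := by
        rw [ContinuousAt, show oinv ((0:ℂ) : OnePoint ℂ) = ∞ by simp [oinv_coe], hsup,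
          tendsto_sup]
        refine ⟨key, ?_⟩
        have := tendsto_pure_nhds (fun w : ℂ => oinv w) 0
        simpa [oinv_coe] using this
      exact this
    · have hc : ContinuousAt (fun w : ℂ => ((w⁻¹ : ℂ) : OnePoint ℂ)) z :=
        OnePoint.continuous_coe.continuousAt.comp (continuousAt_inv₀ hz)
      refine hc.congr ?_
      filter_upwards [isOpen_compl_singleton.mem_nhds (by simpa using hz)] with w hw
      rw [oinv_coe]
      exact (if_neg (by simpa using hw)).symm

noncomputable def invHomeo : OnePoint ℂ ≃ₜ OnePoint ℂ where
  toFun := oinv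
  invFun := oinv
  left_inv := oinv_oinv
  right_inv := oinv_oinv
  continuous_toFun := continuous_oinv
  continuous_invFun := continuous_oinv

noncomputable def embImageHomeo {X Y : Type*} [TopologicalSpace X] [TopologicalSpace Y]
    {f : X → Y} (hf : Topology.IsEmbedding f) (s : Set X) : s ≃ₜ (f '' s) :=
  (Equiv.Set.image f s hf.injective).toHomeomorphOfIsInducing <| by
    refine Topology.IsInducing.of_comp
      (Continuous.subtype_mk (hf.continuous.comp continuous_subtype_val) _)
      continuous_subtype_val ?_
    exact hf.isInducing.comp Topology.IsInducing.subtypeVal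

/-- A proper holomorphic embedding of an open subset `U ⊆ ℂ` into `ℂ²`. -/
def ProperHoloEmb (U : Set ℂ) (φ : ℂ → ℂ × ℂ) : Prop :=
  Set.InjOn φ U ∧ DifferentiableOn ℂ φ U ∧
  (∀ x ∈ U, ∃ v : ℂ × ℂ, HasDerivWithinAt φ v U x ∧ v ≠ 0) ∧
  ∀ K : Set (ℂ × ℂ), IsCompact K → IsCompact {x ∈ U | φ x ∈ K}

theorem stmt17 (C : Set (OnePoint ℂ)) (hfin : C.Finite) (hne : C.Nonempty) :
    ∃ (n : ℕ) (c : Fin n → ℂ), Function.Injective c ∧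
      Nonempty (↥(Cᶜ) ≃ₜ ↥((Set.range c)ᶜ : Set ℂ)) ∧
      ProperHoloEmb (Set.range c)ᶜ (fun x => (x, ∏ i, (x - c i)⁻¹)) := by
  classical
  obtain ⟨H, hH⟩ : ∃ H : OnePoint ℂ ≃ₜ OnePoint ℂ, ∞ ∈ H '' C := by
    by_cases hinf : ∞ ∈ C
    · exact ⟨Homeomorph.refl _, ⟨∞, hinf, rfl⟩⟩
    · obtain ⟨p0, hp0⟩ := hne
      induction p0 using OnePoint.rec with
      | infty => exact absurd hp0 hinf
      | coe p =>
        refine ⟨(Homeomorph.subRight p).onePointCongr.trans invHomeo,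
          ⟨(p : OnePoint ℂ), hp0, ?_⟩⟩
        show invHomeo (OnePoint.map (Homeomorph.subRight p) (p : OnePoint ℂ)) = ∞
        rw [OnePoint.map_some]
        simp [invHomeo, oinv_coe]
  set D : Set (OnePoint ℂ) := H '' C with hD
  have hDfin : D.Finite := hfin.image _
  set S : Set ℂ := ((↑) : ℂ → OnePoint ℂ) ⁻¹' D with hS
  have hSfin : S.Finite := hDfin.preimage OnePoint.coe_injective.injOn
  set s : Finset ℂ := hSfin.toFinset with hs
  set c : Fin s.card → ℂ := fun i => (s.equivFin.symm i : ℂ) with hc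
  have hcinj : Function.Injective c :=
    Subtype.val_injective.comp s.equivFin.symm.injective
  have hrange : Set.range c = S := by
    ext z
    simp only [hc, Set.mem_range]
    constructor
    · rintro ⟨i, rfl⟩
      exact hSfin.mem_toFinset.mp (s.equivFin.symm i).2
    · intro hz
      refine ⟨s.equivFin ⟨z, hSfin.mem_toFinset.mpr hz⟩, ?_⟩
      simp
  have hDc : Dᶜ = ((↑) : ℂ → OnePoint ℂ) '' Sᶜ := by
    ext x
    induction x using OnePoint.rec with
    | infty =>
      simp only [Set.mem_compl_iff, Set.mem_image]
      constructor
      · intro h; exact absurd hH h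
      · rintro ⟨w, -, hw⟩; exact absurd hw (OnePoint.coe_ne_infty w)
    | coe z =>
      simp only [Set.mem_compl_iff, Set.mem_image]
      constructor
      · intro h
        exact ⟨z, fun hzS => h (by simpa [hS] using hzS), rfl⟩
      · rintro ⟨w, hw, hwz⟩
        rw [OnePoint.coe_eq_coe] at hwz
        subst hwz
        intro hzD
        exact hw (by simpa [hS] using hzD)
  refine ⟨s.card, c, hcinj, ?_, ?_⟩
  · rw [hrange]
    exact ⟨(H.image Cᶜ).trans ((Homeomorph.setCongr
        (by rw [Homeomorph.image_compl]; exact hDc)).trans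
      (embImageHomeo OnePoint.isOpenEmbedding_coe.isEmbedding Sᶜ).symm)⟩
  · set U : Set ℂ := (Set.range c)ᶜ with hU
    set p : ℂ → ℂ := fun x => ∏ i, (x - c i) with hp
    have hφ : (fun x : ℂ => (x, ∏ i, (x - c i)⁻¹)) = fun x => (x, (p x)⁻¹) := by
      funext x
      simp [hp, Finset.prod_inv_distrib]
    have hpcont : Continuous p :=
      continuous_finset_prod _ fun i _ => continuous_id.sub continuous_const
    have hpdiff : Differentiable ℂ p := by
      rw [hp]
      have : ∀ t : Finset (Fin s.card),
          Differentiable ℂ (fun x : ℂ => ∏ i ∈ t, (x - c i)) := by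
        intro t
        induction t using Finset.induction with
        | empty => simpa using differentiable_const (1 : ℂ)
        | insert _ _ h ih =>
          simp only [Finset.prod_insert h]
          exact (differentiable_id.sub (differentiable_const _)).mul ih
      exact this Finset.univ
    have hpne : ∀ x ∈ U, p x ≠ 0 := by
      intro x hx
      refine Finset.prod_ne_zero_iff.mpr fun i _ => sub_ne_zero.mpr fun h => ?_
      exact hx ⟨i, h.symm⟩
    rw [hφ]
    have hbound : ∀ (R : ℝ), ∀ x, x ∈ U → (x, (p x)⁻¹) ∈ Metric.closedBall (0 : ℂ × ℂ) R →
        ‖x‖ ≤ R ∧ R⁻¹ ≤ ‖p x‖ := by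
      intro R x hxU hxK
      rw [Metric.mem_closedBall, dist_zero_right] at hxK
      refine ⟨le_trans (norm_fst_le ((x, (p x)⁻¹) : ℂ × ℂ)) hxK, ?_⟩
      have hsnd : ‖(p x)⁻¹‖ ≤ R := le_trans (norm_snd_le ((x, (p x)⁻¹) : ℂ × ℂ)) hxK
      rw [norm_inv] at hsnd
      have hpx : 0 < ‖p x‖ := norm_pos_iff.mpr (hpne x hxU)
      have h2 := inv_anti₀ (inv_pos.mpr hpx) hsnd
      rwa [inv_inv] at h2
    refine ⟨fun x _ y _ h => congrArg Prod.fst h, ?_, ?_, ?_⟩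
    · intro x hx
      exact (differentiableAt_id.prodMk
        ((hpdiff x).inv (hpne x hx))).differentiableWithinAt
    · intro x hx
      refine ⟨(1, deriv (fun y => (p y)⁻¹) x), ?_, ?_⟩
      · exact HasDerivWithinAt.prodMk (hasDerivWithinAt_id x U)
          (((hpdiff x).inv (hpne x hx)).hasDerivAt.hasDerivWithinAt)
      · intro h
        simpa using congrArg Prod.fst h
    · intro K hK
      obtain ⟨R0, hR0⟩ := hK.isBounded.subset_closedBall (0 : ℂ × ℂ)
      set R := max R0 1 with hR
      have hRpos : (0:ℝ) < R := lt_of_lt_of_le one_pos (le_max_right _ _)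
      have hKR : K ⊆ Metric.closedBall 0 R :=
        hR0.trans (Metric.closedBall_subset_closedBall (le_max_left _ _))
      rw [Metric.isCompact_iff_isClosed_bounded]
      constructor
      · apply IsSeqClosed.isClosed
        intro u x hu hx
        have hpu : Tendsto (fun n => p (u n)) atTop (𝓝 (p x)) :=
          (hpcont.continuousAt).tendsto.comp hx
        have hxU : x ∈ U := by
          by_contra hxc
          obtain ⟨i, rfl⟩ : x ∈ Set.range c := not_not.mp (by simpa [hU] using hxc)
          have hp0 : p (c i) = 0 := Finset.prod_eq_zero (Finset.mem_univ i) (sub_self _)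
          rw [hp0] at hpu
          have h2 : Tendsto (fun n => ‖p (u n)‖) atTop (𝓝 0) := by
            simpa using hpu.norm
          have h3 : ∀ᶠ n in atTop, ‖p (u n)‖ < R⁻¹ :=
            h2.eventually (gt_mem_nhds (inv_pos.mpr hRpos))
          obtain ⟨n, hn⟩ := h3.exists
          exact absurd hn (not_lt.mpr (hbound R (u n) (hu n).1 (hKR (hu n).2)).2)
        refine ⟨hxU, ?_⟩
        have hcont : ContinuousAt (fun y => (y, (p y)⁻¹)) x :=
          continuousAt_id.prodMk ((hpcont.continuousAt).inv₀ (hpne x hxU))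
        exact hK.isClosed.mem_of_tendsto (hcont.tendsto.comp hx)
          (Filter.Eventually.of_forall fun n => (hu n).2)
      · apply (Metric.isBounded_closedBall (x := (0:ℂ)) (r := R)).subset
        intro x hx
        rw [Metric.mem_closedBall, dist_zero_right]
        exact (hbound R x hx.1 (hKR hx.2)).1
end
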